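/- arXiv:1705.09061 — 2 statements merged into one kernel-verified Lean document; each statement's English description precedes it below -/
import Mathlib

section
/- Let G = (V,E) be a simple graph on n vertices, let ε ∈ [0,1], let X ⊆ V, and suppose that every pair {j,l} ∈ Δ(X) satisfies m({j,l}) < 27 n^ε ln n. Then for every set U ⊆ V and every real number m̄ > 0, the number of vertices in U that are not m̄-good for (U,X) is at most 27|U|² n^ε ln n / m̄². -/
open MeasureTheory

variable {V : Type*} [Fintype V] [DecidableEq V]

/-- `m({j,l})`: the number of common neighbors of `j` and `l` in `G`. -/
def commonNbrs (G : SimpleGraph V) [DecidableRel G.Adj] (j l : V) : ℕ :=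
  (Finset.univ.filter fun k => G.Adj j k ∧ G.Adj l k).card

/-- `{u,v} ∈ Δ(X)`: no vertex of `X` is adjacent to both `u` and `v`. -/
def inDelta (G : SimpleGraph V) (X : Finset V) (u v : V) : Prop :=
  ∀ x ∈ X, ¬ (G.Adj x u ∧ G.Adj x v)

instance (G : SimpleGraph V) [DecidableRel G.Adj] (X : Finset V) (u v : V) :
    Decidable (inDelta G X u v) := by unfold inDelta; infer_instance

/-- `S^X_U(j,k) = {l ∈ U : {j,l} ∈ Δ(X) and {k,l} ∈ E}`. -/
def Sset (G : SimpleGraph V) [DecidableRel G.Adj] (X U : Finset V) (j k : V) : Finset V :=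
  U.filter fun l => l ≠ j ∧ inDelta G X j l ∧ G.Adj k l

/-- `T^X_U(j) = {k ∈ U : {j,k} ∈ E and |S^X_U(j,k)| > m̄}`. -/
noncomputable def Tset (G : SimpleGraph V) [DecidableRel G.Adj] (X U : Finset V) (mb : ℝ)
    (j : V) : Finset V :=
  U.filter fun k => G.Adj j k ∧ mb < ((Sset G X U j k).card : ℝ)

/-- A vertex `j ∈ U` is `m̄`-good for `(U, X)` if `|T^X_U(j)| ≤ m̄`. -/
def IsGood (G : SimpleGraph V) [DecidableRel G.Adj] (X U : Finset V) (mb : ℝ) (j : V) : Prop :=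
  ((Tset G X U mb j).card : ℝ) ≤ mb

noncomputable instance (G : SimpleGraph V) [DecidableRel G.Adj] (X U : Finset V) (mb : ℝ) (j : V) :
    Decidable (IsGood G X U mb j) := by unfold IsGood; infer_instance

/-- **Counting argument in the proof of Lemma 3 of the paper.**
Let `G = (V,E)` be a simple graph on `n` vertices, `ε ∈ [0,1]`, and `X ⊆ V`, and suppose
that every pair of (distinct) vertices `{j,l} ∈ Δ(X)` satisfies `m({j,l}) < 27 n^ε ln n`.
Then for every `U ⊆ V` and every real `m̄ > 0`, the number of vertices of `U` that are not
`m̄`-good for `(U,X)` is at most `27 |U|² n^ε ln n / m̄²`. -/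
theorem count_not_good_vertices
    (G : SimpleGraph V) [DecidableRel G.Adj]
    (n : ℕ) (hn : n = Fintype.card V)
    (ε : ℝ) (hε0 : 0 ≤ ε) (hε1 : ε ≤ 1)
    (X : Finset V)
    (hX : ∀ j l : V, j ≠ l → inDelta G X j l →
      (commonNbrs G j l : ℝ) < 27 * (n : ℝ) ^ ε * Real.log n) :
    ∀ (U : Finset V) (mb : ℝ), 0 < mb →
      (((U.filter fun j => ¬ IsGood G X U mb j).card : ℝ)) ≤
        27 * (U.card : ℝ) ^ 2 * (n : ℝ) ^ ε * Real.log n / mb ^ 2 := by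
  intro U mb hmb
  set M : ℝ := 27 * (n : ℝ) ^ ε * Real.log n with hMdef
  have hlog : (0 : ℝ) ≤ Real.log n := by
    rcases Nat.eq_zero_or_pos n with h | h
    · simp [h]
    · rcases Nat.lt_or_ge n 2 with h2 | h2
      · interval_cases n <;> simp
      · have h1 : (1:ℕ) ≤ n := by omega
        exact Real.log_nonneg (by exact_mod_cast h1)
  have hM : 0 ≤ M := by
    apply mul_nonneg (mul_nonneg (by norm_num) _) hlog
    exact Real.rpow_nonneg (Nat.cast_nonneg n) ε
  set B := U.filter (fun j => ¬ IsGood G X U mb j) with hB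
  -- Step A: for each bad vertex, mb * mb ≤ sum over T of |S|
  have stepA : ∀ j ∈ B, mb * mb ≤
      ∑ k ∈ Tset G X U mb j, ((Sset G X U j k).card : ℝ) := by
    intro j hj
    rw [hB, Finset.mem_filter] at hj
    have hTj : mb < ((Tset G X U mb j).card : ℝ) := by
      have := hj.2
      unfold IsGood at this
      exact lt_of_not_ge this
    calc mb * mb ≤ ((Tset G X U mb j).card : ℝ) * mb :=
          mul_le_mul_of_nonneg_right hTj.le hmb.le
      _ = ∑ _k ∈ Tset G X U mb j, mb := by
          rw [Finset.sum_const, nsmul_eq_mul]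
      _ ≤ ∑ k ∈ Tset G X U mb j, ((Sset G X U j k).card : ℝ) := by
          apply Finset.sum_le_sum
          intro k hk
          rw [Tset, Finset.mem_filter] at hk
          exact hk.2.2.le
  -- Step B: for each j, sum over T of |S| ≤ |U| * M
  have stepB : ∀ j : V,
      ∑ k ∈ Tset G X U mb j, ((Sset G X U j k).card : ℝ) ≤ (U.card : ℝ) * M := by
    intro j
    have hswap : ∑ k ∈ Tset G X U mb j, ((Sset G X U j k).card : ℝ) =
        ∑ l ∈ U, ∑ k ∈ Tset G X U mb j,
          (if l ≠ j ∧ inDelta G X j l ∧ G.Adj k l then (1 : ℝ) else 0) := by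
      rw [Finset.sum_comm]
      apply Finset.sum_congr rfl
      intro k _
      rw [Sset, Finset.card_filter]
      push_cast
      rfl
    rw [hswap]
    calc ∑ l ∈ U, ∑ k ∈ Tset G X U mb j,
          (if l ≠ j ∧ inDelta G X j l ∧ G.Adj k l then (1 : ℝ) else 0)
        ≤ ∑ _l ∈ U, M := by
          apply Finset.sum_le_sum
          intro l _
          by_cases hcase : l ≠ j ∧ inDelta G X j l
          · have hinner : ∑ k ∈ Tset G X U mb j,
                (if l ≠ j ∧ inDelta G X j l ∧ G.Adj k l then (1 : ℝ) else 0) =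
                (((Tset G X U mb j).filter fun k => G.Adj k l).card : ℝ) := by
              rw [Finset.card_filter]
              push_cast
              apply Finset.sum_congr rfl
              intro k _
              simp [hcase.1, hcase.2]
            rw [hinner]
            have hsub : ((Tset G X U mb j).filter fun k => G.Adj k l) ⊆
                Finset.univ.filter fun k => G.Adj j k ∧ G.Adj l k := by
              intro k hk
              rw [Finset.mem_filter] at hk ⊢
              rw [Tset, Finset.mem_filter] at hk
              exact ⟨Finset.mem_univ k, hk.1.2.1, hk.2.symm⟩
            have hcard : (((Tset G X U mb j).filter fun k => G.Adj k l).card : ℝ) ≤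
                (commonNbrs G j l : ℝ) := by
              exact_mod_cast Finset.card_le_card hsub
            have hne : j ≠ l := fun h => hcase.1 h.symm
            have hdel : inDelta G X j l := hcase.2
            exact hcard.trans (hX j l hne hdel).le
          · rw [Finset.sum_eq_zero]
            · exact hM
            · intro k _
              simp only [ite_eq_right_iff]
              intro h
              exact absurd ⟨h.1, h.2.1⟩ hcase
      _ = (U.card : ℝ) * M := by rw [Finset.sum_const, nsmul_eq_mul]
  -- combine
  have key : (B.card : ℝ) * (mb * mb) ≤ (U.card : ℝ) * ((U.card : ℝ) * M) := by
    calc (B.card : ℝ) * (mb * mb) = ∑ _j ∈ B, mb * mb := by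
          rw [Finset.sum_const, nsmul_eq_mul]
      _ ≤ ∑ j ∈ B, ∑ k ∈ Tset G X U mb j, ((Sset G X U j k).card : ℝ) :=
          Finset.sum_le_sum stepA
      _ ≤ ∑ _j ∈ B, (U.card : ℝ) * M := Finset.sum_le_sum fun j _ => stepB j
      _ = (B.card : ℝ) * ((U.card : ℝ) * M) := by rw [Finset.sum_const, nsmul_eq_mul]
      _ ≤ (U.card : ℝ) * ((U.card : ℝ) * M) := by
          apply mul_le_mul_of_nonneg_right _ (mul_nonneg (Nat.cast_nonneg _) hM)
          exact_mod_cast Finset.card_le_card (Finset.filter_subset _ U)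
  have hfin : (B.card : ℝ) ≤ 27 * (U.card : ℝ) ^ 2 * (n : ℝ) ^ ε * Real.log n / mb ^ 2 := by
    rw [le_div_iff₀ (by positivity : (0:ℝ) < mb ^ 2)]
    calc (B.card : ℝ) * mb ^ 2 = (B.card : ℝ) * (mb * mb) := by ring
      _ ≤ (U.card : ℝ) * ((U.card : ℝ) * M) := key
      _ = 27 * (U.card : ℝ) ^ 2 * (n : ℝ) ^ ε * Real.log n := by
          rw [hMdef]; ring
  exact hfin
end

section
/- Let G = (V,E) be a simple graph on n ≥ 2 vertices, let ε ∈ [0,1], and let X be a random subset of V obtained by including each vertex independently with probability 1/(9n^ε). Then for any real number m̄ ≥ √(54 n^{1+ε} ln n), with probability at least 1 − 1/n the following holds: for every set U ⊆ V, at most |U|/2 vertices of U are not m̄-good for (U,X). -/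
open MeasureTheory

variable {V : Type*} [Fintype V] [DecidableEq V]

/-- Decomposition of the probability of an event depending on a finite random variable. -/
lemma measure_pred_toReal {Ω : Type*} [MeasurableSpace Ω] (μ : Measure Ω) [IsProbabilityMeasure μ]
    {α : Type*} [Fintype α] [DecidableEq α] (X : Ω → α)
    (hmeas : ∀ a : α, MeasurableSet {ω | X ω = a})
    (P : α → Prop) [DecidablePred P] :
    MeasurableSet {ω | P (X ω)} ∧
    (μ {ω | P (X ω)}).toReal = ∑ a ∈ Finset.univ.filter P, (μ {ω | X ω = a}).toReal := by
  have hset : {ω | P (X ω)} = ⋃ a ∈ Finset.univ.filter P, {ω | X ω = a} := by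
    ext ω
    simp only [Set.mem_setOf_eq, Set.mem_iUnion, Finset.mem_filter, Finset.mem_univ, true_and]
    constructor
    · intro h; exact ⟨X ω, h, rfl⟩
    · rintro ⟨a, ha, h⟩; rw [h]; exact ha
  have hdisj : (↑(Finset.univ.filter P) : Set α).PairwiseDisjoint
      (fun a => {ω | X ω = a}) := by
    intro a _ b _ hab
    simp only [Function.onFun, Set.disjoint_left, Set.mem_setOf_eq]
    intro ω h1 h2
    exact hab (h1 ▸ h2 ▸ rfl)
  constructor
  · rw [hset]; exact (Finset.univ.filter P).measurableSet_biUnion (fun a _ => hmeas a)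
  · rw [hset, measure_biUnion_finset hdisj (fun a _ => hmeas a)]
    exact ENNReal.toReal_sum (fun a _ => measure_ne_top μ _)

lemma sum_powerset_binom {α : Type*} [DecidableEq α] (T : Finset α) (p q : ℝ) :
    ∑ F ∈ T.powerset, p ^ F.card * q ^ (T.card - F.card) = (p + q) ^ T.card := by
  rw [← Finset.prod_const, Finset.prod_add]
  apply Finset.sum_congr rfl
  intro F hF
  rw [Finset.mem_powerset] at hF
  rw [Finset.prod_const, Finset.prod_const, Finset.card_sdiff_of_subset hF]

/-- The probability that a pair `(u,v)` lies in `Δ(X)`. -/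
lemma delta_sum (G : SimpleGraph V) [DecidableRel G.Adj] (u v : V)
    (n : ℕ) (hn : n = Fintype.card V) (p : ℝ) (hp1 : p + (1 - p) = 1) :
    ∑ F ∈ Finset.univ.filter (fun F : Finset V => inDelta G F u v),
      p ^ F.card * (1 - p) ^ (n - F.card)
    = (1 - p) ^ (commonNbrs G u v) := by
  classical
  set CN : Finset V := Finset.univ.filter (fun x => G.Adj x u ∧ G.Adj x v) with hCN
  have hfilter : Finset.univ.filter (fun F : Finset V => inDelta G F u v) = CNᶜ.powerset := by
    ext F
    simp only [Finset.mem_filter, Finset.mem_univ, true_and, Finset.mem_powerset, hCN,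
      inDelta, Finset.subset_iff, Finset.mem_compl, Finset.mem_filter]
    exact ⟨fun h => (Finset.mem_filter.mp h).2, fun h => Finset.mem_filter.mpr ⟨Finset.mem_univ _, h⟩⟩
  rw [hfilter]
  have hCNcard : CNᶜ.card = n - CN.card := by
    simp [Finset.card_compl, hn]
  have key : ∀ F ∈ CNᶜ.powerset, p ^ F.card * (1 - p) ^ (n - F.card)
      = (1 - p) ^ CN.card * (p ^ F.card * (1 - p) ^ (CNᶜ.card - F.card)) := by
    intro F hF
    rw [Finset.mem_powerset] at hF
    have h1 : F.card ≤ CNᶜ.card := Finset.card_le_card hF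
    have h2 : CN.card ≤ n := by rw [hn]; exact Finset.card_le_univ _
    have h3 : n - F.card = CN.card + (CNᶜ.card - F.card) := by omega
    rw [h3, pow_add]; ring
  rw [Finset.sum_congr rfl key, ← Finset.mul_sum, sum_powerset_binom, hp1, one_pow, mul_one]
  congr 1
  unfold commonNbrs
  apply Finset.card_bij (fun x _ => x) <;> simp [hCN, SimpleGraph.adj_comm]

/-- Deterministic counting: if every heavy pair is hit by `X`, then every vertex is good. -/
lemma all_good (G : SimpleGraph V) [DecidableRel G.Adj] (n : ℕ) (hn : n = Fintype.card V)
    (t mb : ℝ) (ht0 : 0 < t) (hmb0 : 0 < mb) (hnt : 2 * ((n:ℝ) * t) ≤ mb^2)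
    (Xf U : Finset V)
    (hX : ∀ u v : V, t ≤ (commonNbrs G u v : ℝ) → ¬ inDelta G Xf u v)
    (j : V) : IsGood G Xf U mb j := by
  by_contra hbad
  unfold IsGood at hbad
  push_neg at hbad
  set T := Tset G Xf U mb j with hT
  set N : ℕ := ∑ k ∈ T, (Sset G Xf U j k).card with hN
  have hlow : mb * mb < (N:ℝ) := by
    have h1 : ∀ k ∈ T, mb ≤ ((Sset G Xf U j k).card : ℝ) := by
      intro k hk
      simp only [hT, Tset, Finset.mem_filter] at hk
      exact le_of_lt hk.2.2
    have h2 : (T.card : ℝ) * mb ≤ (N:ℝ) := by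
      rw [hN]
      push_cast
      calc (T.card : ℝ) * mb = ∑ _k ∈ T, mb := by rw [Finset.sum_const]; ring
        _ ≤ ∑ k ∈ T, ((Sset G Xf U j k).card:ℝ) := Finset.sum_le_sum h1
    calc mb * mb < (T.card:ℝ) * mb := mul_lt_mul_of_pos_right hbad hmb0
      _ ≤ (N:ℝ) := h2
  have hup : (N:ℝ) ≤ (n:ℝ) * t := by
    have swap : N = ∑ l ∈ U, (T.filter (fun k => l ≠ j ∧ inDelta G Xf j l ∧ G.Adj k l)).card := by
      rw [hN]
      have e1 : ∀ k, (Sset G Xf U j k).card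
          = ∑ l ∈ U, if l ≠ j ∧ inDelta G Xf j l ∧ G.Adj k l then 1 else 0 := by
        intro k; rw [Sset, Finset.card_filter]
      have e2 : ∀ l, (T.filter (fun k => l ≠ j ∧ inDelta G Xf j l ∧ G.Adj k l)).card
          = ∑ k ∈ T, if l ≠ j ∧ inDelta G Xf j l ∧ G.Adj k l then 1 else 0 := by
        intro l; rw [Finset.card_filter]
      simp only [e1, e2]
      exact Finset.sum_comm
    have hterm : ∀ l ∈ U,
        ((T.filter (fun k => l ≠ j ∧ inDelta G Xf j l ∧ G.Adj k l)).card : ℝ) ≤ t := by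
      intro l _
      by_cases h : l ≠ j ∧ inDelta G Xf j l
      · have hsub : T.filter (fun k => l ≠ j ∧ inDelta G Xf j l ∧ G.Adj k l)
            ⊆ Finset.univ.filter (fun k => G.Adj j k ∧ G.Adj l k) := by
          intro k hk
          simp only [Finset.mem_filter, hT, Tset] at hk ⊢
          exact ⟨Finset.mem_univ _, hk.1.2.1, hk.2.2.2.symm⟩
        have hcn : ((commonNbrs G j l : ℝ)) < t := by
          by_contra hge
          push_neg at hge
          exact hX j l hge h.2
        have hle : ((T.filter (fun k => l ≠ j ∧ inDelta G Xf j l ∧ G.Adj k l)).card : ℝ)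
            ≤ (commonNbrs G j l : ℝ) := by exact_mod_cast Finset.card_le_card hsub
        linarith
      · have : T.filter (fun k => l ≠ j ∧ inDelta G Xf j l ∧ G.Adj k l) = ∅ := by
          apply Finset.filter_false_of_mem
          intro k _ hc
          exact h ⟨hc.1, hc.2.1⟩
        rw [this]; simpa using ht0.le
    calc (N:ℝ) = ∑ l ∈ U, ((T.filter (fun k => l ≠ j ∧ inDelta G Xf j l ∧ G.Adj k l)).card : ℝ) := by
          rw [swap]; push_cast; ring
      _ ≤ ∑ _l ∈ U, t := Finset.sum_le_sum hterm
      _ = (U.card : ℝ) * t := by rw [Finset.sum_const]; ring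
      _ ≤ (n:ℝ) * t := by
          apply mul_le_mul_of_nonneg_right _ ht0.le
          exact_mod_cast hn ▸ Finset.card_le_univ U
  nlinarith [sq_nonneg mb]

/-- **Lemma 3 of the paper.**
Let `G = (V,E)` be a simple graph on `n ≥ 2` vertices, `ε ∈ [0,1]`, and let `X` be a
random subset of `V` obtained by including each vertex independently with probability
`1/(9 n^ε)`.  Then for any real number `m̄ ≥ √(54 n^{1+ε} ln n)`, with probability at
least `1 - 1/n` the following holds: for every set `U ⊆ V`, at most `|U|/2` vertices
of `U` are not `m̄`-good for `(U, X)`. -/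
theorem most_vertices_good
    {Ω : Type*} [MeasurableSpace Ω] (μ : Measure Ω) [IsProbabilityMeasure μ]
    (G : SimpleGraph V) [DecidableRel G.Adj]
    (n : ℕ) (hn : n = Fintype.card V) (hn2 : 2 ≤ n)
    (ε : ℝ) (hε0 : 0 ≤ ε) (hε1 : ε ≤ 1)
    (X : Ω → Finset V)
    (hmeas : ∀ F : Finset V, MeasurableSet {ω | X ω = F})
    (hdist : ∀ F : Finset V, (μ {ω | X ω = F}).toReal =
      (1 / (9 * (n : ℝ) ^ ε)) ^ F.card *
        (1 - 1 / (9 * (n : ℝ) ^ ε)) ^ (n - F.card))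
    (mb : ℝ) (hmb : Real.sqrt (54 * (n : ℝ) ^ (1 + ε) * Real.log n) ≤ mb) :
    1 - 1 / (n : ℝ) ≤
      (μ {ω | ∀ U : Finset V,
        (((U.filter fun j => ¬ IsGood G (X ω) U mb j).card : ℝ)) ≤ (U.card : ℝ) / 2}).toReal := by
  -- basic numeric facts
  have hn1 : (1:ℝ) < (n:ℝ) := by exact_mod_cast hn2.trans_lt' one_lt_two
  have hn0 : (0:ℝ) < n := by linarith
  have hnε : (1:ℝ) ≤ (n:ℝ) ^ ε := Real.one_le_rpow hn1.le hε0
  have hnε0 : (0:ℝ) < (n:ℝ) ^ ε := by linarith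
  set p : ℝ := 1 / (9 * (n:ℝ) ^ ε) with hp
  have hp0 : 0 < p := by positivity
  have hp9 : p ≤ 1/9 := by
    rw [hp]
    rw [div_le_div_iff₀ (by positivity) (by norm_num)]
    linarith
  set t : ℝ := 27 * (n:ℝ) ^ ε * Real.log n with ht
  have hlog : 0 < Real.log n := Real.log_pos hn1
  have ht0 : 0 < t := by rw [ht]; positivity
  have hn1ε : (n:ℝ) ^ (1 + ε) = (n:ℝ) * (n:ℝ) ^ ε := by
    rw [Real.rpow_add hn0, Real.rpow_one]
  have hA0 : (0:ℝ) < 54 * (n:ℝ) ^ (1 + ε) * Real.log n := by positivity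
  have hmbsq : 2 * ((n:ℝ) * t) ≤ mb ^ 2 := by
    have h2 : Real.sqrt (54 * (n:ℝ) ^ (1 + ε) * Real.log n) ^ 2 ≤ mb ^ 2 :=
      pow_le_pow_left₀ (Real.sqrt_nonneg _) hmb 2
    rw [Real.sq_sqrt hA0.le] at h2
    calc 2 * ((n:ℝ) * t) = 54 * (n:ℝ) ^ (1 + ε) * Real.log n := by rw [ht, hn1ε]; ring
      _ ≤ mb ^ 2 := h2
  have hmb0 : 0 < mb := lt_of_lt_of_le (Real.sqrt_pos.mpr hA0) hmb
  classical
  -- the good event E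
  set E : Set Ω :=
    {ω | ∀ u v : V, t ≤ (commonNbrs G u v : ℝ) → ¬ inDelta G (X ω) u v} with hE
  have hEmeas : MeasurableSet E :=
    (measure_pred_toReal μ X hmeas
      (fun F => ∀ u v : V, t ≤ (commonNbrs G u v : ℝ) → ¬ inDelta G F u v)).1
  -- Step A: on E, every vertex is good
  have hsub : E ⊆ {ω | ∀ U : Finset V,
      (((U.filter fun j => ¬ IsGood G (X ω) U mb j).card : ℝ)) ≤ (U.card : ℝ) / 2} := by
    intro ω hω
    intro U
    have hempty : (U.filter fun j => ¬ IsGood G (X ω) U mb j) = ∅ := by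
      apply Finset.filter_false_of_mem
      intro j _ hj
      exact hj (all_good G n hn t mb ht0 hmb0 hmbsq (X ω) U hω j)
    rw [hempty]
    simp only [Finset.card_empty, Nat.cast_zero]
    positivity
  -- Step B: the probability of E
  set D : Finset (V × V) :=
    (Finset.univ ×ˢ Finset.univ).filter (fun uv => t ≤ (commonNbrs G uv.1 uv.2 : ℝ)) with hD
  have hEc : Eᶜ ⊆ ⋃ uv ∈ D, {ω | inDelta G (X ω) uv.1 uv.2} := by
    intro ω hω
    simp only [hE, Set.mem_compl_iff, Set.mem_setOf_eq] at hω
    push_neg at hω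
    obtain ⟨u, v, hcn, hdel⟩ := hω
    have hmem : (u, v) ∈ D := by simp [hD, hcn]
    exact Set.mem_biUnion hmem hdel
  have hterm : ∀ uv : V × V, uv ∈ D →
      (μ {ω | inDelta G (X ω) uv.1 uv.2}).toReal ≤ 1 / (n:ℝ) ^ 3 := by
    intro uv huv
    obtain ⟨_, hval⟩ := measure_pred_toReal μ X hmeas (fun F => inDelta G F uv.1 uv.2)
    rw [hval]
    have hsum : ∑ F ∈ Finset.univ.filter (fun F : Finset V => inDelta G F uv.1 uv.2),
        (μ {ω | X ω = F}).toReal = (1 - p) ^ (commonNbrs G uv.1 uv.2) := by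
      rw [Finset.sum_congr rfl (fun F _ => hdist F)]
      exact delta_sum G uv.1 uv.2 n hn p (by ring)
    rw [hsum]
    have hs : t ≤ (commonNbrs G uv.1 uv.2 : ℝ) := (Finset.mem_filter.mp huv).2
    set s : ℕ := commonNbrs G uv.1 uv.2 with hsdef
    have hq0 : (0:ℝ) ≤ 1 - p := by linarith
    have hqe : 1 - p ≤ Real.exp (-p) := by linarith [Real.add_one_le_exp (-p)]
    have h1 : (1 - p) ^ s ≤ Real.exp (-p) ^ s := pow_le_pow_left₀ hq0 hqe s
    have h2 : Real.exp (-p) ^ s = Real.exp (-(p * s)) := by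
      rw [← Real.exp_nat_mul]; congr 1; ring
    have h3 : Real.exp (-(p * s)) ≤ Real.exp (-(3 * Real.log n)) := by
      apply Real.exp_le_exp.mpr
      have hpt : p * t = 3 * Real.log n := by
        rw [hp, ht]; field_simp; ring
      have hps : p * t ≤ p * s := mul_le_mul_of_nonneg_left hs hp0.le
      linarith
    have h4 : Real.exp (-(3 * Real.log n)) = 1 / (n:ℝ) ^ 3 := by
      rw [Real.exp_neg, show (3:ℝ) * Real.log n = ((3:ℕ):ℝ) * Real.log n by norm_num,
        Real.exp_nat_mul, Real.exp_log hn0, one_div]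
    linarith
  have hEcval : (μ Eᶜ).toReal ≤ 1 / (n:ℝ) := by
    have h1 : μ Eᶜ ≤ ∑ uv ∈ D, μ {ω | inDelta G (X ω) uv.1 uv.2} :=
      le_trans (measure_mono hEc) (measure_biUnion_finset_le D _)
    have h2 : (μ Eᶜ).toReal ≤ ∑ uv ∈ D, (μ {ω | inDelta G (X ω) uv.1 uv.2}).toReal := by
      refine le_trans (ENNReal.toReal_mono ?_ h1) ?_
      · exact (ENNReal.sum_lt_top.mpr (fun uv _ => measure_lt_top μ _)).ne
      · rw [ENNReal.toReal_sum (fun uv _ => measure_ne_top μ _)]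
    have h3 : ∑ uv ∈ D, (μ {ω | inDelta G (X ω) uv.1 uv.2}).toReal
        ≤ (D.card : ℝ) * (1 / (n:ℝ) ^ 3) := by
      calc ∑ uv ∈ D, (μ {ω | inDelta G (X ω) uv.1 uv.2}).toReal
          ≤ ∑ _uv ∈ D, 1 / (n:ℝ) ^ 3 := Finset.sum_le_sum hterm
        _ = (D.card : ℝ) * (1 / (n:ℝ) ^ 3) := by rw [Finset.sum_const]; ring
    have hDcard : (D.card : ℝ) ≤ (n:ℝ) ^ 2 := by
      have hc : D.card ≤ n * n := by
        calc D.card ≤ (Finset.univ ×ˢ Finset.univ : Finset (V × V)).card :=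
              Finset.card_le_card (Finset.filter_subset _ _)
          _ = n * n := by rw [Finset.card_product]; simp [hn]
      calc (D.card : ℝ) ≤ ((n * n : ℕ) : ℝ) := by exact_mod_cast hc
        _ = (n:ℝ) ^ 2 := by push_cast; ring
    have h5 : (D.card : ℝ) * (1 / (n:ℝ) ^ 3) ≤ 1 / (n:ℝ) := by
      rw [mul_one_div, div_le_div_iff₀ (by positivity) hn0]
      nlinarith [hDcard, hn0]
    linarith
  have htot : (μ E).toReal + (μ Eᶜ).toReal = 1 := by
    rw [← ENNReal.toReal_add (measure_ne_top μ _) (measure_ne_top μ _),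
      measure_add_measure_compl hEmeas, measure_univ, ENNReal.toReal_one]
  calc 1 - 1 / (n:ℝ) ≤ (μ E).toReal := by linarith
    _ ≤ _ := ENNReal.toReal_mono (measure_ne_top μ _) (measure_mono hsub)
end
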